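/- arXiv:2011.07922 — 2 statements merged into one kernel-verified Lean document; each statement's English description precedes it below -/
import Mathlib

section
/- For every prime N and every τ in the complex upper half-plane ℍ, ∑_{b=0}^{N−1} E₂^{(N)}((τ+b)/N) = N·E₂^{(N)}(τ); that is, E₂^{(N)} is an eigenform of the Atkin–Lehner operator U_N (defined by (U_N f)(τ) = (1/N)·∑_{b=0}^{N−1} f((τ+b)/N)) with eigenvalue +1. -/
open Complex

noncomputable def sigma1 (n : ℕ) : ℕ := ∑ d ∈ n.divisors, d

noncomputable def E2 (τ : ℂ) : ℂ :=
  1 - 24 * ∑' n : ℕ, (sigma1 (n + 1) : ℂ) * Complex.exp (2 * Real.pi * I * (n + 1) * τ)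

/-- The weight-two Eisenstein series of Γ₀(N): E₂^{(N)}(τ) = (N·E₂(Nτ) − E₂(τ))/(N−1). -/
noncomputable def E2N (N : ℕ) (τ : ℂ) : ℂ :=
  ((N : ℂ) * E2 ((N : ℂ) * τ) - E2 τ) / ((N : ℂ) - 1)

/- ### Auxiliary lemmas -/

lemma sigma1_le (n : ℕ) : sigma1 n ≤ n * n := by
  rcases Nat.eq_zero_or_pos n with h | h
  · simp [h, sigma1]
  · have hsub : n.divisors ⊆ Finset.Ico 1 (n + 1) := by
      intro d hd
      rw [Finset.mem_Ico]
      exact ⟨Nat.pos_of_mem_divisors hd, Nat.lt_succ_of_le (Nat.divisor_le hd)⟩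
    calc sigma1 n ≤ ∑ _d ∈ n.divisors, n :=
          Finset.sum_le_sum fun d hd => Nat.divisor_le hd
      _ = n.divisors.card * n := by rw [Finset.sum_const, smul_eq_mul]
      _ ≤ n * n := Nat.mul_le_mul_right _ (le_trans (Finset.card_le_card hsub) (by simp))

/-- Summability of q-expansions with polynomially bounded coefficients. -/
lemma summable_aux (C : ℕ) (c : ℕ → ℕ) (hc : ∀ n, c n ≤ C * ((n + 1) * (n + 1)))
    (z : ℂ) (hz : 0 < z.im) :
    Summable (fun n : ℕ => (c n : ℂ) * Complex.exp (2 * Real.pi * I * (n + 1) * z)) := by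
  set r : ℝ := Real.exp (-(2 * Real.pi * z.im)) with hr
  have hr0 : 0 < r := Real.exp_pos _
  have hr1 : r < 1 := by
    rw [hr, Real.exp_lt_one_iff]
    nlinarith [Real.pi_pos]
  have hgeom : Summable (fun n : ℕ => (C : ℝ) * (((n : ℝ) + 1) ^ 2 * r ^ (n + 1))) := by
    apply Summable.mul_left
    have h0 : Summable (fun n : ℕ => (n : ℝ) ^ 2 * r ^ n) :=
      summable_pow_mul_geometric_of_norm_lt_one 2
        (by rwa [Real.norm_eq_abs, abs_of_pos hr0])
    have h2 := (_root_.summable_nat_add_iff 1).mpr h0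
    apply h2.congr
    intro n
    push_cast
    ring
  apply Summable.of_norm
  apply hgeom.of_nonneg_of_le (fun n => norm_nonneg _)
  intro n
  have hnorm : ‖Complex.exp (2 * Real.pi * I * (n + 1) * z)‖ = r ^ (n + 1) := by
    have harg : (2 * Real.pi * I * ((n : ℂ) + 1) * z) = ((n + 1 : ℕ) : ℂ) * (2 * Real.pi * I * z) := by
      push_cast; ring
    rw [harg, Complex.exp_nat_mul, norm_pow]
    congr 1
    rw [Complex.norm_exp, hr]
    congr 1
    simp only [Complex.mul_re, Complex.mul_im, Complex.ofReal_re, Complex.ofReal_im,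
      Complex.I_re, Complex.I_im, Complex.re_ofNat, Complex.im_ofNat]
    ring
  rw [norm_mul, hnorm, Complex.norm_natCast]
  have hb : (c n : ℝ) ≤ (C : ℝ) * ((n : ℝ) + 1) ^ 2 := by
    have := hc n
    have : (c n : ℝ) ≤ ((C * ((n + 1) * (n + 1)) : ℕ) : ℝ) := by exact_mod_cast this
    refine this.trans (le_of_eq ?_)
    push_cast; ring
  calc (c n : ℝ) * r ^ (n + 1) ≤ ((C : ℝ) * ((n : ℝ) + 1) ^ 2) * r ^ (n + 1) :=
        mul_le_mul_of_nonneg_right hb (pow_nonneg hr0.le _)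
    _ = (C : ℝ) * (((n : ℝ) + 1) ^ 2 * r ^ (n + 1)) := by ring

lemma summable_term (z : ℂ) (hz : 0 < z.im) :
    Summable (fun n : ℕ => (sigma1 (n + 1) : ℂ) * Complex.exp (2 * Real.pi * I * (n + 1) * z)) :=
  summable_aux 1 _ (fun n => by simpa using sigma1_le (n + 1)) z hz

/-- Geometric character sum: ∑_{b<N} e^{2πimb/N} = N if N ∣ m else 0. -/
lemma sum_exp_dvd (N : ℕ) (hN : 0 < N) (m : ℕ) :
    ∑ b ∈ Finset.range N, Complex.exp (2 * Real.pi * I * m * b / N)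
      = if N ∣ m then (N : ℂ) else 0 := by
  have hNC : (N : ℂ) ≠ 0 := Nat.cast_ne_zero.mpr hN.ne'
  set x : ℂ := Complex.exp (2 * Real.pi * I * m / N) with hx
  have hterm : ∀ b : ℕ, Complex.exp (2 * Real.pi * I * m * b / N) = x ^ b := by
    intro b
    rw [hx, ← Complex.exp_nat_mul]
    congr 1
    field_simp
  simp_rw [hterm]
  by_cases h : N ∣ m
  · obtain ⟨k, rfl⟩ := h
    have hx1 : x = 1 := by
      rw [hx]
      have harg : 2 * (Real.pi : ℂ) * I * ((N * k : ℕ) : ℂ) / N = ((k : ℤ) : ℂ) * (2 * Real.pi * I) := by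
        push_cast
        field_simp
      rw [harg, Complex.exp_int_mul_two_pi_mul_I]
    rw [if_pos ⟨k, rfl⟩]
    simp [hx1]
  · have hxN : x ^ N = 1 := by
      rw [hx, ← Complex.exp_nat_mul]
      have harg : (N : ℂ) * (2 * Real.pi * I * m / N) = ((m : ℤ) : ℂ) * (2 * Real.pi * I) := by
        push_cast
        field_simp
      rw [harg, Complex.exp_int_mul_two_pi_mul_I]
    have hx1 : x ≠ 1 := by
      intro hx1
      rw [hx, Complex.exp_eq_one_iff] at hx1
      obtain ⟨l, hl⟩ := hx1
      apply h
      have h2pi : (2 * (Real.pi : ℂ) * I) ≠ 0 :=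
        mul_ne_zero (mul_ne_zero two_ne_zero (Complex.ofReal_ne_zero.mpr Real.pi_ne_zero)) I_ne_zero
      field_simp at hl
      have hcan : (2 * (Real.pi : ℂ) * I) * (m : ℂ) = (2 * (Real.pi : ℂ) * I) * ((l * N : ℤ) : ℂ) := by
        push_cast
        linear_combination (2 * (Real.pi : ℂ) * I) * hl
      have hm : ((m : ℤ) : ℂ) = ((l * N : ℤ) : ℂ) := by
        push_cast
        exact_mod_cast mul_left_cancel₀ h2pi hcan
      have hmz : (m : ℤ) = l * N := by exact_mod_cast hm
      have : (N : ℤ) ∣ (m : ℤ) := ⟨l, by linarith⟩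
      exact_mod_cast this
    rw [geom_sum_eq hx1, hxN]
    simp [h]

/-- Reindexing a tsum supported on n with N ∣ n+1. -/
lemma tsum_of_dvd_support (N : ℕ) (hN : 0 < N) (f : ℕ → ℂ)
    (hf : ∀ n, ¬ N ∣ (n + 1) → f n = 0) :
    ∑' n : ℕ, f n = ∑' m : ℕ, f (N * m + (N - 1)) := by
  symm
  apply Function.Injective.tsum_eq (g := fun m : ℕ => N * m + (N - 1))
  · intro a b hab
    simp only at hab
    exact Nat.eq_of_mul_eq_mul_left hN (Nat.add_right_cancel hab)
  · intro n hn
    rw [Function.mem_support] at hn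
    have hdvd : N ∣ n + 1 := by
      by_contra hd
      exact hn (hf n hd)
    obtain ⟨k, hk⟩ := hdvd
    match k, hk with
    | 0, hk => simp at hk
    | k' + 1, hk =>
      refine ⟨k', ?_⟩
      show N * k' + (N - 1) = n
      have hlin : N * (k' + 1) = N * k' + N := by ring
      omega

/-- E₂ is 1-periodic. -/
lemma E2_add_nat (z : ℂ) (b : ℕ) : E2 (z + b) = E2 z := by
  unfold E2
  congr 2
  apply tsum_congr
  intro n
  congr 1
  have harg : 2 * (Real.pi : ℂ) * I * ((n : ℂ) + 1) * (z + b)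
      = 2 * Real.pi * I * ((n : ℂ) + 1) * z + (((n + 1) * b : ℕ) : ℤ) * (2 * Real.pi * I) := by
    push_cast
    ring
  rw [harg, Complex.exp_add, Complex.exp_int_mul_two_pi_mul_I, mul_one]

/-- The divisor-sum recursion at a prime. -/
lemma sigma1_prime_mul (N : ℕ) (hN : N.Prime) (m : ℕ) (hm : 0 < m) :
    sigma1 (N * m) + N * (if N ∣ m then sigma1 (m / N) else 0) = (N + 1) * sigma1 m := by
  have hσ : ∀ k : ℕ, sigma1 k = ArithmeticFunction.sigma 1 k := by
    intro k
    rw [ArithmeticFunction.sigma_one_apply]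
    rfl
  have hppow : ∀ i : ℕ, ArithmeticFunction.sigma 1 (N ^ i) = ∑ k ∈ Finset.range (i + 1), N ^ k :=
    fun i => ArithmeticFunction.sigma_one_apply_prime_pow hN
  obtain ⟨a, ha⟩ : ∃ a, a = m.factorization N := ⟨_, rfl⟩
  obtain ⟨m', hm'⟩ : ∃ m', m' = m / N ^ a := ⟨_, rfl⟩
  have hmm : m = N ^ a * m' := by
    rw [hm', ha]
    exact (Nat.ordProj_mul_ordCompl_eq_self m N).symm
  have hcop : Nat.Coprime N m' := by
    rw [hm', ha]
    exact Nat.coprime_ordCompl hN hm.ne'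
  have hm'pos : 0 < m' := by
    rw [hm', ha]
    exact Nat.ordCompl_pos N hm.ne'
  have hcoppow : ∀ i : ℕ, Nat.Coprime (N ^ i) m' := fun i => hcop.pow_left i
  have hmul : ∀ i : ℕ, ArithmeticFunction.sigma 1 (N ^ i * m')
      = (∑ k ∈ Finset.range (i + 1), N ^ k) * ArithmeticFunction.sigma 1 m' := by
    intro i
    rw [ArithmeticFunction.isMultiplicative_sigma.map_mul_of_coprime (hcoppow i), hppow]
  rcases Nat.eq_zero_or_pos a with ha0 | hapos
  · -- a = 0 : N does not divide m
    have hmeq : m = m' := by rw [hmm, ha0, pow_zero, one_mul]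
    have hndvd : ¬ N ∣ m := by
      rw [hmeq]
      exact (Nat.Prime.coprime_iff_not_dvd hN).mp hcop
    rw [if_neg hndvd, mul_zero, add_zero, hσ, hσ]
    have : N * m = N ^ 1 * m' := by rw [pow_one, hmeq]
    rw [this, hmul 1, hmeq]
    rw [Finset.sum_range_succ, Finset.sum_range_one, pow_zero, pow_one]
    ring
  · -- a ≥ 1 : N divides m
    obtain ⟨a', rfl⟩ : ∃ a', a = a' + 1 := ⟨a - 1, by omega⟩
    have hNpos : 0 < N := hN.pos
    have hdvd : N ∣ m := by
      rw [hmm]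
      exact Dvd.dvd.mul_right (dvd_pow_self N (Nat.succ_ne_zero a')) m'
    have hdiv : m / N = N ^ a' * m' := by
      rw [hmm, pow_succ, mul_comm (N ^ a') N, mul_assoc, Nat.mul_div_cancel_left _ hNpos]
    have hNm : N * m = N ^ (a' + 2) * m' := by
      rw [hmm]
      ring
    rw [if_pos hdvd, hσ, hσ, hσ, hNm, hdiv, hmm, hmul, hmul, hmul]
    have hs1 : ∑ k ∈ Finset.range (a' + 3), N ^ k
        = (N * ∑ k ∈ Finset.range (a' + 2), N ^ k) + 1 := geom_sum_succ
    have hs2 : ∑ k ∈ Finset.range (a' + 2), N ^ k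
        = (N * ∑ k ∈ Finset.range (a' + 1), N ^ k) + 1 := geom_sum_succ
    have : a' + 2 + 1 = a' + 3 := by omega
    rw [this, hs1, hs2]
    ring

lemma im_div_nat (z : ℂ) (N : ℕ) (hN : 0 < N) (hz : 0 < z.im) : 0 < (z / (N : ℂ)).im := by
  have h1 : (z / (N : ℂ)).im = z.im / (N : ℝ) := by
    rw [Complex.div_im]
    simp [Complex.normSq_apply]
    rw [div_eq_div_iff (by positivity) (by positivity)]
    ring
  rw [h1]
  positivity

lemma im_nat_mul (z : ℂ) (N : ℕ) (hN : 0 < N) (hz : 0 < z.im) : 0 < ((N : ℂ) * z).im := by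
  have h1 : ((N : ℂ) * z).im = (N : ℝ) * z.im := by
    simp [Complex.mul_im]
  rw [h1]
  positivity

/-- The key computation: summing E₂ over the U_N points. -/
lemma sumE2_eq (N : ℕ) (hN : 0 < N) (τ : ℂ) (hτ : 0 < τ.im) :
    ∑ b ∈ Finset.range N, E2 ((τ + b) / N)
      = (N : ℂ) - 24 * N * ∑' m : ℕ,
          (sigma1 (N * (m + 1)) : ℂ) * Complex.exp (2 * Real.pi * I * (m + 1) * τ) := by
  have hNC : (N : ℂ) ≠ 0 := Nat.cast_ne_zero.mpr hN.ne'
  have him : ∀ b : ℕ, 0 < ((τ + b) / (N : ℂ)).im := by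
    intro b
    apply im_div_nat _ _ hN
    simp [Complex.add_im]
    exact hτ
  have key : ∑ b ∈ Finset.range N,
        (∑' n : ℕ, (sigma1 (n + 1) : ℂ) * Complex.exp (2 * Real.pi * I * (n + 1) * ((τ + b) / N)))
      = (N : ℂ) * ∑' m : ℕ,
          (sigma1 (N * (m + 1)) : ℂ) * Complex.exp (2 * Real.pi * I * (m + 1) * τ) := by
    rw [← Summable.tsum_finsetSum (fun b _ => summable_term _ (him b))]
    have hswap : ∀ n : ℕ,
        (∑ b ∈ Finset.range N,
            (sigma1 (n + 1) : ℂ) * Complex.exp (2 * Real.pi * I * (n + 1) * ((τ + b) / N)))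
          = if N ∣ (n + 1) then
              (N : ℂ) * ((sigma1 (n + 1) : ℂ) * Complex.exp (2 * Real.pi * I * (n + 1) * (τ / N)))
            else 0 := by
      intro n
      have hsplit : ∀ b : ℕ,
          Complex.exp (2 * Real.pi * I * (n + 1) * ((τ + b) / N))
            = Complex.exp (2 * Real.pi * I * (n + 1) * (τ / N))
              * Complex.exp (2 * Real.pi * I * ((n + 1 : ℕ) : ℂ) * b / N) := by
        intro b
        rw [← Complex.exp_add]
        congr 1
        have : ((τ + b) / (N : ℂ)) = τ / N + (b : ℂ) / N := by ring
        rw [this]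
        push_cast
        ring
      simp_rw [hsplit, ← mul_assoc]
      rw [← Finset.mul_sum, sum_exp_dvd N hN (n + 1)]
      split_ifs with h
      · ring
      · rw [mul_zero]
    rw [tsum_congr hswap]
    rw [tsum_of_dvd_support N hN _ (fun n hn => if_neg hn)]
    rw [← tsum_mul_left]
    apply tsum_congr
    intro m
    have h1 : N * m + (N - 1) + 1 = N * (m + 1) := by
      have : N * (m + 1) = N * m + N := by ring
      omega
    have hdvd : N ∣ (N * m + (N - 1)) + 1 := ⟨m + 1, h1⟩
    rw [if_pos hdvd]
    congr 1
    rw [h1]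
    congr 1
    have h2 : ((N * m + (N - 1) : ℕ) : ℂ) + 1 = ((N * (m + 1) : ℕ) : ℂ) := by
      exact_mod_cast congrArg (fun k : ℕ => (k : ℂ)) h1
    rw [h2]
    congr 1
    push_cast
    field_simp
  unfold E2
  rw [Finset.sum_sub_distrib, Finset.sum_const, Finset.card_range, nsmul_eq_mul, mul_one,
    ← Finset.mul_sum, key]
  ring

/-- Reindexing: the "divide by N" coefficients sum to E₂ at Nτ. -/
lemma tsum_Tprime (N : ℕ) (hN : 0 < N) (τ : ℂ) :
    (∑' m : ℕ, ((if N ∣ (m + 1) then sigma1 ((m + 1) / N) else 0 : ℕ) : ℂ)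
        * Complex.exp (2 * Real.pi * I * (m + 1) * τ))
      = ∑' n : ℕ, (sigma1 (n + 1) : ℂ) * Complex.exp (2 * Real.pi * I * (n + 1) * ((N : ℂ) * τ)) := by
  rw [tsum_of_dvd_support N hN _ (fun n hn => by rw [if_neg hn]; simp)]
  apply tsum_congr
  intro m
  have h1 : N * m + (N - 1) + 1 = N * (m + 1) := by
    have : N * (m + 1) = N * m + N := by ring
    omega
  have hdvd : N ∣ (N * m + (N - 1)) + 1 := ⟨m + 1, h1⟩
  rw [if_pos hdvd, h1, Nat.mul_div_cancel_left _ hN]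
  congr 1
  have h2 : ((N * m + (N - 1) : ℕ) : ℂ) + 1 = ((N * (m + 1) : ℕ) : ℂ) := by
    exact_mod_cast congrArg (fun k : ℕ => (k : ℂ)) h1
  rw [h2]
  congr 1
  push_cast
  ring

/-- For prime N, E₂^{(N)} is an eigenform of the Atkin–Lehner operator U_N with
eigenvalue +1: ∑_{b=0}^{N−1} E₂^{(N)}((τ+b)/N) = N·E₂^{(N)}(τ). -/
theorem E2N_atkinLehner_eigen (N : ℕ) (hN : N.Prime) (τ : ℂ) (hτ : 0 < τ.im) :
    ∑ b ∈ Finset.range N, E2N N ((τ + (b : ℂ)) / (N : ℂ)) = (N : ℂ) * E2N N τ := by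
  have hNpos : 0 < N := hN.pos
  have hNC : (N : ℂ) ≠ 0 := Nat.cast_ne_zero.mpr hNpos.ne'
  have hN1 : (N : ℂ) - 1 ≠ 0 := by
    intro h
    have h1 : (N : ℂ) = ((1 : ℕ) : ℂ) := by push_cast; linear_combination h
    exact hN.one_lt.ne' (Nat.cast_injective (R := ℂ) h1)
  -- summability facts
  have hS : Summable (fun n : ℕ =>
      (sigma1 (n + 1) : ℂ) * Complex.exp (2 * Real.pi * I * (n + 1) * τ)) :=
    summable_term τ hτ
  have hT' : Summable (fun m : ℕ =>
      ((if N ∣ (m + 1) then sigma1 ((m + 1) / N) else 0 : ℕ) : ℂ)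
        * Complex.exp (2 * Real.pi * I * (m + 1) * τ)) := by
    apply summable_aux 1 _ _ τ hτ
    intro n
    split_ifs with h
    · calc sigma1 ((n + 1) / N) ≤ ((n + 1) / N) * ((n + 1) / N) := sigma1_le _
        _ ≤ (n + 1) * (n + 1) := Nat.mul_le_mul (Nat.div_le_self _ _) (Nat.div_le_self _ _)
        _ = 1 * ((n + 1) * (n + 1)) := (one_mul _).symm
    · exact Nat.zero_le _
  -- the coefficient identity, cast to ℂ
  have hcoef : ∀ m : ℕ,
      (sigma1 (N * (m + 1)) : ℂ) * Complex.exp (2 * Real.pi * I * (m + 1) * τ)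
        = ((N : ℂ) + 1) * ((sigma1 (m + 1) : ℂ) * Complex.exp (2 * Real.pi * I * (m + 1) * τ))
          - (N : ℂ) * (((if N ∣ (m + 1) then sigma1 ((m + 1) / N) else 0 : ℕ) : ℂ)
              * Complex.exp (2 * Real.pi * I * (m + 1) * τ)) := by
    intro m
    have hnat := sigma1_prime_mul N hN (m + 1) (Nat.succ_pos m)
    have hC : (sigma1 (N * (m + 1)) : ℂ)
        + (N : ℂ) * ((if N ∣ (m + 1) then sigma1 ((m + 1) / N) else 0 : ℕ) : ℂ)
        = ((N : ℂ) + 1) * (sigma1 (m + 1) : ℂ) := by exact_mod_cast hnat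
    linear_combination Complex.exp (2 * Real.pi * I * (m + 1) * τ) * hC
  have hU : (∑' m : ℕ, (sigma1 (N * (m + 1)) : ℂ) * Complex.exp (2 * Real.pi * I * (m + 1) * τ))
      = ((N : ℂ) + 1) * (∑' n : ℕ, (sigma1 (n + 1) : ℂ) * Complex.exp (2 * Real.pi * I * (n + 1) * τ))
        - (N : ℂ) * (∑' n : ℕ, (sigma1 (n + 1) : ℂ)
            * Complex.exp (2 * Real.pi * I * (n + 1) * ((N : ℂ) * τ))) := by
    rw [tsum_congr hcoef, Summable.tsum_sub (hS.mul_left _) (hT'.mul_left _), tsum_mul_left, tsum_mul_left,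
      tsum_Tprime N hNpos τ]
  -- assemble
  unfold E2N
  have hb : ∀ b ∈ Finset.range N,
      ((N : ℂ) * E2 ((N : ℂ) * ((τ + b) / N)) - E2 ((τ + b) / N)) / ((N : ℂ) - 1)
        = ((N : ℂ) * E2 τ - E2 ((τ + b) / N)) / ((N : ℂ) - 1) := by
    intro b _
    have : (N : ℂ) * ((τ + b) / N) = τ + b := by
      rw [mul_comm, div_mul_cancel₀ _ hNC]
    rw [this, E2_add_nat]
  rw [Finset.sum_congr rfl hb, ← Finset.sum_div, Finset.sum_sub_distrib, Finset.sum_const,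
    Finset.card_range, nsmul_eq_mul, sumE2_eq N hNpos τ hτ]
  rw [hU]
  unfold E2
  generalize (∑' n : ℕ, (sigma1 (n + 1) : ℂ) * Complex.exp (2 * Real.pi * I * (n + 1) * τ)) = S
  generalize (∑' n : ℕ, (sigma1 (n + 1) : ℂ) * Complex.exp (2 * Real.pi * I * (n + 1) * ((N : ℂ) * τ))) = T
  field_simp
  ring
end

section
/- Let ∑_{n≥1} c(n)·qⁿ = q·∏_{m≥1}(1−q^m)²·(1−q^{11m})² as a formal power series in q (the q-expansion of the weight-two level-11 cusp form η(τ)²η(11τ)²). Then c(11·n) = c(n) for every positive integer n; that is, η(τ)²η(11τ)² is an eigenform of the Atkin–Lehner operator U₁₁ with eigenvalue +1. -/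
open Finset PowerSeries


def isign (j : ℤ) : ℤ := if Even j then 1 else -1

lemma isign_eq_of_parity {i j : ℤ} (h : i % 2 = j % 2) : isign i = isign j := by
  unfold isign
  have : Even i ↔ Even j := by
    constructor <;> intro ⟨t, ht⟩ <;> [exact ⟨j/2, by omega⟩; exact ⟨i/2, by omega⟩]
  by_cases hi : Even i
  · rw [if_pos hi, if_pos (this.1 hi)]
  · rw [if_neg hi, if_neg (fun hj => hi (this.2 hj))]

open scoped Classical in
noncomputable def pentSign (k : ℕ) : ℤ :=
  if h : ∃ j : ℤ, j * (3 * j - 1) = 2 * k then isign h.choose else 0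

lemma pent_unique {i j : ℤ} (h : i * (3 * i - 1) = j * (3 * j - 1)) : i = j := by
  have h2 : (i - j) * (3 * (i + j) - 1) = 0 := by nlinarith [h]
  rcases mul_eq_zero.1 h2 with h3 | h3 <;> omega

lemma pentSign_of {j : ℤ} {k : ℕ} (h : j * (3 * j - 1) = 2 * k) : pentSign k = isign j := by
  classical
  rw [pentSign, dif_pos ⟨j, h⟩]
  congr 1
  exact pent_unique ((⟨j, h⟩ : ∃ j : ℤ, j * (3 * j - 1) = 2 * k).choose_spec.trans h.symm)

lemma pentSign_eq_zero {k : ℕ} (h : ∀ j : ℤ, j * (3 * j - 1) ≠ 2 * k) : pentSign k = 0 := by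
  classical
  rw [pentSign, dif_neg]; push_neg; exact h

lemma pentSign_zero : pentSign 0 = 1 := by
  have := pentSign_of (j := 0) (k := 0) (by norm_num)
  simpa [isign] using this

lemma pentSign_ne_zero {k : ℕ} (h : pentSign k ≠ 0) : ∃ j : ℤ, j * (3 * j - 1) = 2 * k := by
  by_contra hcon; push_neg at hcon; exact h (pentSign_eq_zero hcon)

lemma zmod11_single : ∀ x : ZMod 11, x * (3 * x - 1) = 10 → x = 2 := by decide

lemma zmod11_pair : ∀ x y : ZMod 11, x * (3 * x - 1) + y * (3 * y - 1) = 9 → x = 2 ∧ y = 2 := by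
  decide

lemma pent_nonneg (j : ℤ) : 0 ≤ j * (3 * j - 1) := by nlinarith [sq_nonneg j, sq_nonneg (3*j-1)]

/-- if J ≡ 2 mod 11 (as a ZMod fact) then J = 2 - 11 j -/
lemma eq_two_sub {J : ℤ} (h : (J : ZMod 11) = 2) : ∃ j : ℤ, J = 2 - 11 * j := by
  have h0 : ((J - 2 : ℤ) : ZMod 11) = 0 := by push_cast [h]; ring
  obtain ⟨t, ht⟩ := (ZMod.intCast_zmod_eq_zero_iff_dvd (J-2) 11).1 h0
  exact ⟨-t, by omega⟩

/-- from J with J(3J-1) = 2x and J ≡ 2 mod 11, get x = 121 x' + 5 with pentSign x = pentSign x' -/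
lemma pent_descend {J : ℤ} {x : ℕ} (hJ : J * (3 * J - 1) = 2 * x) (h2 : (J : ZMod 11) = 2) :
    ∃ x' : ℕ, x = 121 * x' + 5 ∧ ∃ j : ℤ, j * (3 * j - 1) = 2 * x' ∧ J = 2 - 11 * j := by
  obtain ⟨j, rfl⟩ := eq_two_sub h2
  have hsh : (2 - 11*j) * (3 * (2 - 11*j) - 1) = 121 * (j * (3*j-1)) + 10 := by ring
  obtain ⟨w, hw⟩ : Even (j * (3*j-1)) := by
    rcases Int.even_or_odd j with ⟨t, ht⟩ | ⟨t, ht⟩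
    · exact ⟨t * (3*(t+t)-1), by rw [ht]; ring⟩
    · exact ⟨(2*t+1) * (3*t+1), by rw [ht]; ring⟩
  have hwnn : 0 ≤ w := by nlinarith [pent_nonneg j]
  have hx : (x : ℤ) = 121 * w + 5 := by omega
  refine ⟨w.toNat, by omega, j, by omega, rfl⟩

lemma support_mod {x y u : ℕ} (hx : pentSign x ≠ 0) (hy : pentSign y ≠ 0)
    (hxy : x + y = u) (hu : u % 11 = 10) : x % 121 = 5 ∧ y % 121 = 5 := by
  obtain ⟨i, hi⟩ := pentSign_ne_zero hx
  obtain ⟨j, hj⟩ := pentSign_ne_zero hy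
  have hpair : ((i : ZMod 11)) * (3*(i:ZMod 11) - 1) + (j : ZMod 11) * (3*(j:ZMod 11) - 1) = 9 := by
    have h1 : ((i * (3*i-1) + j * (3*j-1) : ℤ) : ZMod 11) = ((2*u : ℤ) : ZMod 11) := by
      rw [hi, hj]; push_cast [← hxy]; ring
    push_cast at h1
    rw [h1]
    obtain ⟨q, hq⟩ : ∃ q, u = 11*q+10 := ⟨(u-10)/11, by omega⟩
    subst hq; push_cast
    have h11 : (11 : ZMod 11) = 0 := by decide
    linear_combination (2*q : ZMod 11) * h11 + h11
  obtain ⟨h2i, h2j⟩ := zmod11_pair _ _ hpair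
  obtain ⟨x', hx', -⟩ := pent_descend hi h2i
  obtain ⟨y', hy', -⟩ := pent_descend hj h2j
  omega

lemma pentSign_121 (k : ℕ) : pentSign (121 * k + 5) = pentSign k := by
  by_cases h : ∃ j : ℤ, j * (3 * j - 1) = 2 * k
  · obtain ⟨j, hj⟩ := h
    have h2 : (2 - 11*j) * (3 * (2 - 11*j) - 1) = 2 * ((121 * k + 5 : ℕ) : ℤ) := by
      push_cast
      have : (2 - 11*j) * (3 * (2 - 11*j) - 1) = 121 * (j * (3*j-1)) + 10 := by ring
      rw [this, hj]; push_cast; ring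
    rw [pentSign_of h2, pentSign_of hj]
    exact isign_eq_of_parity (by omega)
  · push_neg at h
    rw [pentSign_eq_zero h, pentSign_eq_zero]
    intro J hJ
    have h2 : (J : ZMod 11) = 2 := by
      apply zmod11_single
      have h1 : ((J * (3*J-1) : ℤ) : ZMod 11) = ((2 * ((121 * k + 5 : ℕ) : ℤ) : ℤ) : ZMod 11) := by
        rw [hJ]
      push_cast at h1
      rw [h1]
      have h11 : (11 : ZMod 11) = 0 := by decide
      linear_combination (22*k : ZMod 11) * h11
    obtain ⟨x', hx', j, hjj, -⟩ := pent_descend hJ h2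
    have : x' = k := by omega
    exact h j (by rw [← this]; exact hjj)

namespace Franklin

noncomputable def MM (S : Finset ℕ) : ℕ := if h : S.Nonempty then S.max' h else 0
noncomputable def mm (S : Finset ℕ) : ℕ := if h : S.Nonempty then S.min' h else 0
open scoped Classical in
noncomputable def rr (S : Finset ℕ) : ℕ := if h : ∃ i, MM S - i ∉ S then Nat.find h else 0

variable {S : Finset ℕ}

lemma MM_mem (h : S.Nonempty) : MM S ∈ S := by rw [MM, dif_pos h]; exact S.max'_mem h
lemma le_MM (h : S.Nonempty) {x : ℕ} (hx : x ∈ S) : x ≤ MM S := by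
  rw [MM, dif_pos h]; exact S.le_max' x hx
lemma mm_mem (h : S.Nonempty) : mm S ∈ S := by rw [mm, dif_pos h]; exact S.min'_mem h
lemma mm_le (h : S.Nonempty) {x : ℕ} (hx : x ∈ S) : mm S ≤ x := by
  rw [mm, dif_pos h]; exact S.min'_le x hx
lemma MM_char (h : S.Nonempty) {a : ℕ} (ha : a ∈ S) (hub : ∀ x ∈ S, x ≤ a) : MM S = a :=
  le_antisymm (hub _ (MM_mem h)) (le_MM h ha)
lemma mm_char (h : S.Nonempty) {a : ℕ} (ha : a ∈ S) (hlb : ∀ x ∈ S, a ≤ x) : mm S = a :=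
  le_antisymm (mm_le h ha) (hlb _ (mm_mem h))

lemma rr_ex (h0 : 0 ∉ S) : ∃ i, MM S - i ∉ S := ⟨MM S, by simpa using h0⟩

lemma rr_spec (h0 : 0 ∉ S) : MM S - rr S ∉ S := by
  classical
  rw [rr, dif_pos (rr_ex h0)]
  exact Nat.find_spec (rr_ex h0)

lemma rr_lt_mem (h0 : 0 ∉ S) {i : ℕ} (hi : i < rr S) : MM S - i ∈ S := by
  classical
  rw [rr, dif_pos (rr_ex h0)] at hi
  have := Nat.find_min (rr_ex h0) hi
  simpa using this

lemma rr_pos (h : S.Nonempty) (h0 : 0 ∉ S) : 1 ≤ rr S := by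
  by_contra hcon
  have h1 : rr S = 0 := by omega
  have := rr_spec h0
  rw [h1] at this
  exact this (by simpa using MM_mem h)

lemma rr_le (h0 : 0 ∉ S) {t : ℕ} (ht : MM S - t ∉ S) : rr S ≤ t := by
  classical
  rw [rr, dif_pos (rr_ex h0)]
  exact Nat.find_le ht

lemma le_rr (h0 : 0 ∉ S) {t : ℕ} (ht : ∀ i < t, MM S - i ∈ S) : t ≤ rr S := by
  by_contra hcon
  push_neg at hcon
  exact absurd (ht _ hcon) (rr_spec h0)

lemma rr_char (h0 : 0 ∉ S) {t : ℕ} (h1 : ∀ i < t, MM S - i ∈ S) (h2 : MM S - t ∉ S) : rr S = t :=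
  le_antisymm (rr_le h0 h2) (le_rr h0 h1)

lemma run_subset (h : S.Nonempty) (h0 : 0 ∉ S) {x : ℕ}
    (hx1 : MM S - rr S + 1 ≤ x) (hx2 : x ≤ MM S) : x ∈ S := by
  have hrM : rr S ≤ MM S := rr_le h0 (by simpa using h0)
  have : x = MM S - (MM S - x) := by omega
  rw [this]
  exact rr_lt_mem h0 (by omega)

def IsStair (T : Finset ℕ) : Prop :=
  ∃ c : ℕ, 1 ≤ c ∧ (T = Icc c (2*c-1) ∨ T = Icc (c+1) (2*c))

noncomputable def phi (S : Finset ℕ) : Finset ℕ :=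
  if mm S ≤ rr S then
    ((S.erase (mm S)) \ Icc (MM S - mm S + 1) (MM S)) ∪ Icc (MM S - mm S + 2) (MM S + 1)
  else
    ((S \ Icc (MM S - rr S + 1) (MM S)) ∪ Icc (MM S - rr S) (MM S - 1)) ∪ {rr S}

/-- structure lemma: in UP case, M ≥ 2m -/
lemma up_struct (h : S.Nonempty) (h0 : 0 ∉ S) (hns : ¬ IsStair S) (hmr : mm S ≤ rr S) :
    2 * mm S ≤ MM S := by
  by_contra hcon
  push_neg at hcon
  have hm1 : 1 ≤ mm S := by
    rcases Nat.eq_zero_or_pos (mm S) with h1 | h1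
    · exact absurd (h1 ▸ mm_mem h) h0
    · exact h1
  have hmM : mm S ≤ MM S := mm_le h (MM_mem h)
  have hiff : ∀ y, y ∈ S ↔ (mm S ≤ y ∧ y ≤ MM S) := by
    intro y
    constructor
    · intro hy; exact ⟨mm_le h hy, le_MM h hy⟩
    · rintro ⟨hy1, hy2⟩
      have hrw : y = MM S - (MM S - y) := by omega
      rw [hrw]
      exact rr_lt_mem h0 (by omega)
  have hMr : MM S = 2 * mm S - 1 := by
    have h2 : rr S ≤ MM S - mm S + 1 := by
      apply rr_le h0
      rw [hiff]
      omega
    omega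
  refine hns ⟨mm S, hm1, Or.inl ?_⟩
  ext y
  rw [hiff, mem_Icc]
  omega

/-- structure lemma: in DOWN case, M ≥ 2r+1 -/
lemma down_struct (h : S.Nonempty) (h0 : 0 ∉ S) (hns : ¬ IsStair S) (hmr : rr S < mm S) :
    2 * rr S + 1 ≤ MM S := by
  by_contra hcon
  push_neg at hcon
  have hr1 : 1 ≤ rr S := rr_pos h h0
  have hrM : rr S ≤ MM S := rr_le h0 (by simpa using h0)
  have hmM : mm S ≤ MM S := mm_le h (MM_mem h)
  have hiff : ∀ y, y ∈ S ↔ (MM S - rr S + 1 ≤ y ∧ y ≤ MM S) := by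
    intro y
    constructor
    · intro hy
      have h1 := mm_le h hy
      have h2 := le_MM h hy
      constructor
      · omega
      · exact h2
    · rintro ⟨hy1, hy2⟩
      exact run_subset h h0 hy1 hy2
  have hmmv : mm S = MM S - rr S + 1 := by
    apply mm_char h
    · rw [hiff]; omega
    · intro x hx
      rw [hiff] at hx
      omega
  have hM : MM S = 2 * rr S := by omega
  refine hns ⟨rr S, hr1, Or.inr ?_⟩
  ext y
  rw [hiff, mem_Icc]
  omega


theorem up_main (h : S.Nonempty) (h0 : 0 ∉ S) (hns : ¬ IsStair S) (hmr : mm S ≤ rr S) :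
    (∑ x ∈ phi S, x = ∑ x ∈ S, x) ∧ ((phi S).card + 1 = S.card) ∧
    (∀ x ∈ phi S, 1 ≤ x ∧ x ≤ MM S + 1) ∧ ¬ IsStair (phi S) ∧ phi (phi S) = S := by
  set m := mm S with hm
  set M := MM S with hM
  have hm1 : 1 ≤ m := by
    rcases Nat.eq_zero_or_pos m with h1 | h1
    · exact absurd (h1 ▸ mm_mem h) h0
    · exact h1
  have h2m : 2 * m ≤ M := up_struct h h0 hns hmr
  have hmM : m < M := by omega
  have hblock_sub : ∀ x, M - m + 1 ≤ x → x ≤ M → x ∈ S := by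
    intro x h1 h2
    exact run_subset h h0 (by have := hmr; omega) h2
  have hup : phi S = ((S.erase m) \ Icc (M - m + 1) M) ∪ Icc (M - m + 2) (M + 1) := by
    rw [phi, if_pos hmr]
  have hmem : ∀ x, x ∈ phi S ↔
      ((x ∈ S ∧ x ≠ m ∧ ¬(M - m + 1 ≤ x ∧ x ≤ M)) ∨ (M - m + 2 ≤ x ∧ x ≤ M + 1)) := by
    intro x
    simp [hup, mem_union, mem_sdiff, mem_erase, mem_Icc, and_assoc]
    tauto
  -- sums and cards
  have hsub : Icc (M - m + 1) M ⊆ S.erase m := by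
    intro x hx
    rw [mem_Icc] at hx
    rw [mem_erase]
    exact ⟨by omega, hblock_sub x hx.1 hx.2⟩
  have hdisj : Disjoint ((S.erase m) \ Icc (M - m + 1) M) (Icc (M - m + 2) (M + 1)) := by
    rw [Finset.disjoint_left]
    intro x hx1 hx2
    rw [mem_sdiff, mem_erase, mem_Icc] at hx1
    rw [mem_Icc] at hx2
    have := le_MM h hx1.1.2
    omega
  have hcardblock : (Icc (M - m + 1) M).card = m := by
    rw [Nat.card_Icc]; omega
  have hcardnb : (Icc (M - m + 2) (M + 1)).card = m := by
    rw [Nat.card_Icc]; omega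
  have himg : Icc (M - m + 2) (M + 1) = (Icc (M - m + 1) M).image (· + 1) := by
    rw [Finset.image_add_right_Icc]
  have hsumnb : ∑ x ∈ Icc (M - m + 2) (M + 1), x = (∑ x ∈ Icc (M - m + 1) M, x) + m := by
    rw [himg, Finset.sum_image (by intro a _ b _ hab; simp only at hab; omega)]
    rw [Finset.sum_add_distrib, Finset.sum_const, hcardblock, smul_eq_mul, mul_one]
  have hsum : ∑ x ∈ phi S, x = ∑ x ∈ S, x := by
    rw [hup, Finset.sum_union hdisj, hsumnb, ← add_assoc, Finset.sum_sdiff hsub,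
      Finset.sum_erase_add S _ (mm_mem h)]
  have hcard : (phi S).card + 1 = S.card := by
    rw [hup, Finset.card_union_of_disjoint hdisj, hcardnb]
    have h1 : ((S.erase m) \ Icc (M - m + 1) M).card + (Icc (M - m + 1) M).card
        = (S.erase m).card := Finset.card_sdiff_add_card_eq_card hsub
    have h2 : (S.erase m).card + 1 = S.card := by
      rw [Finset.card_erase_of_mem (mm_mem h)]
      have : 1 ≤ S.card := Finset.card_pos.2 h
      omega
    omega
  -- bounds
  have hbd : ∀ x ∈ phi S, 1 ≤ x ∧ x ≤ M + 1 := by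
    intro x hx
    rw [hmem] at hx
    rcases hx with ⟨hxS, -, -⟩ | hx
    · have h1 := le_MM h hxS
      have h2 := mm_le h hxS
      omega
    · omega
  -- phi S is nonempty, no zero
  have hne' : (phi S).Nonempty := ⟨M + 1, by rw [hmem]; right; omega⟩
  have h0' : 0 ∉ phi S := by
    rw [hmem]
    push_neg
    constructor
    · intro hc; exact absurd hc h0
    · omega
  -- max, min, slope of phi S
  have hMM' : MM (phi S) = M + 1 := by
    apply MM_char hne'
    · rw [hmem]; right; omega
    · intro x hx; exact (hbd x hx).2
  have hgap : M - m + 1 ∉ phi S := by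
    intro hc
    rw [hmem] at hc
    rcases hc with ⟨-, -, h3⟩ | h4
    · exact h3 (by omega)
    · omega
  have hrr' : rr (phi S) = m := by
    apply rr_char h0'
    · intro i hi
      rw [hMM', hmem]
      right
      omega
    · rw [hMM']
      have : M + 1 - m = M - m + 1 := by omega
      rw [this]
      exact hgap
  have hmm' : m < mm (phi S) := by
    have hx := mm_mem hne'
    rw [hmem] at hx
    rcases hx with ⟨hxS, hne, -⟩ | hx
    · have := mm_le h hxS
      omega
    · omega
  -- not stair
  have hnstair' : ¬ IsStair (phi S) := by
    rintro ⟨c, hc1, hcase⟩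
    have key : ∀ a b : ℕ, a ≤ b → (b = 2*a - 1 ∨ b = 2*a - 2) → phi S = Icc a b → False := by
      intro a b hab hrel hab2
      have hbM : b = M + 1 := by
        rw [← hMM', hab2]
        symm
        apply MM_char (by rw [hab2] at hne'; exact hne')
        · rw [mem_Icc]; omega
        · intro x hx; rw [mem_Icc] at hx; omega
      have ha2 : M - m + 2 ≤ a := by
        by_contra hcon
        push_neg at hcon
        apply hgap
        rw [hab2, mem_Icc]
        omega
      have ha3 : M - m + 2 ∈ phi S := by rw [hmem]; right; omega
      have ha4 : a ≤ M - m + 2 := by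
        rw [hab2, mem_Icc] at ha3
        exact ha3.1
      -- a = M - m + 2, b = M + 1, stair relations contradict M ≥ 2m
      omega
    rcases hcase with hcase | hcase
    · exact key c (2*c-1) (by omega) (by omega) hcase
    · exact key (c+1) (2*c) (by omega) (by omega) hcase
  refine ⟨hsum, hcard, hbd, hnstair', ?_⟩
  -- phi (phi S) = S
  have hdown : phi (phi S) =
      ((phi S \ Icc (M - m + 2) (M + 1)) ∪ Icc (M - m + 1) M) ∪ {m} := by
    rw [phi, if_neg (by omega)]
    rw [hMM', hrr']
    rw [show M + 1 - m + 1 = M - m + 2 by omega, show M + 1 - m = M - m + 1 by omega,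
      show M + 1 - 1 = M by omega]
  rw [hdown]
  ext y
  simp only [mem_union, mem_sdiff, mem_singleton, mem_Icc, hmem y]
  have hbs : (M - m + 1 ≤ y ∧ y ≤ M) → y ∈ S := fun hc => hblock_sub y hc.1 hc.2
  by_cases hy : y ∈ S
  · have hyM := le_MM h hy
    have hym := mm_le h hy
    simp only [hy, iff_true, true_and, ne_eq]
    omega
  · simp only [hy, false_and, false_or, iff_false]
    rintro ((⟨hnb, hnnb⟩ | hblk) | hym)
    · exact hnnb hnb
    · exact hy (hbs hblk)
    · exact hy (hym ▸ mm_mem h)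

theorem down_main (h : S.Nonempty) (h0 : 0 ∉ S) (hns : ¬ IsStair S) (hmr : rr S < mm S) :
    (∑ x ∈ phi S, x = ∑ x ∈ S, x) ∧ (S.card + 1 = (phi S).card) ∧
    (∀ x ∈ phi S, 1 ≤ x ∧ x ≤ MM S) ∧ ¬ IsStair (phi S) ∧ phi (phi S) = S := by
  set r := rr S with hrdef
  set M := MM S with hM
  have hr1 : 1 ≤ r := rr_pos h h0
  have hrM : r ≤ M := rr_le h0 (by simpa [hM] using h0)
  have hD : 2 * r + 1 ≤ M := down_struct h h0 hns hmr
  have hm1 : 1 ≤ mm S := by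
    rcases Nat.eq_zero_or_pos (mm S) with h1 | h1
    · exact absurd (h1 ▸ mm_mem h) h0
    · exact h1
  have hblock_sub : ∀ x, M - r + 1 ≤ x → x ≤ M → x ∈ S := fun x h1 h2 => run_subset h h0 h1 h2
  have hMr_notin : M - r ∉ S := rr_spec h0
  have hdn : phi S = ((S \ Icc (M - r + 1) M) ∪ Icc (M - r) (M - 1)) ∪ {r} := by
    rw [phi, if_neg (by omega)]
  have hmem : ∀ x, x ∈ phi S ↔
      (((x ∈ S ∧ ¬(M - r + 1 ≤ x ∧ x ≤ M)) ∨ (M - r ≤ x ∧ x ≤ M - 1)) ∨ x = r) := by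
    intro x
    simp [hdn, mem_union, mem_sdiff, mem_singleton, mem_Icc]
    tauto
  have hsmall : ∀ x ∈ S, ¬(M - r + 1 ≤ x ∧ x ≤ M) → x ≤ M - r - 1 := by
    intro x hx hnb
    have h1 := le_MM h hx
    have h2 : x ≠ M - r := fun e => hMr_notin (e ▸ hx)
    omega
  have hd1 : Disjoint (S \ Icc (M - r + 1) M) (Icc (M - r) (M - 1)) := by
    rw [Finset.disjoint_left]
    intro x hx1 hx2
    rw [mem_sdiff] at hx1
    rw [mem_Icc] at hx2
    have hx1' : ¬(M - r + 1 ≤ x ∧ x ≤ M) := by rw [← mem_Icc]; exact hx1.2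
    have := hsmall x hx1.1 hx1'
    omega
  have hd2 : Disjoint ((S \ Icc (M - r + 1) M) ∪ Icc (M - r) (M - 1)) {r} := by
    rw [Finset.disjoint_right]
    intro x hx1 hx2
    rw [mem_singleton] at hx1
    simp only [mem_union, mem_sdiff, mem_Icc] at hx2
    subst hx1
    rcases hx2 with ⟨hx, -⟩ | hx
    · have := mm_le h hx; omega
    · omega
  have hcardblock : (Icc (M - r + 1) M).card = r := by rw [Nat.card_Icc]; omega
  have hcarddb : (Icc (M - r) (M - 1)).card = r := by rw [Nat.card_Icc]; omega
  have hblocksub' : Icc (M - r + 1) M ⊆ S := fun x hx => by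
    rw [mem_Icc] at hx; exact hblock_sub x hx.1 hx.2
  have himg : Icc (M - r + 1) M = (Icc (M - r) (M - 1)).image (· + 1) := by
    rw [Finset.image_add_right_Icc]
    congr 1 <;> omega
  have hsumb : ∑ x ∈ Icc (M - r + 1) M, x = (∑ x ∈ Icc (M - r) (M - 1), x) + r := by
    rw [himg, Finset.sum_image (by intro a _ b _ hab; simp only at hab; omega)]
    rw [Finset.sum_add_distrib, Finset.sum_const, hcarddb, smul_eq_mul, mul_one]
  have hsum : ∑ x ∈ phi S, x = ∑ x ∈ S, x := by
    rw [hdn, Finset.sum_union hd2, Finset.sum_union hd1, Finset.sum_singleton]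
    have h1 : (∑ x ∈ S \ Icc (M - r + 1) M, x) + (∑ x ∈ Icc (M - r + 1) M, x) = ∑ x ∈ S, x :=
      Finset.sum_sdiff hblocksub'
    omega
  have hcard : S.card + 1 = (phi S).card := by
    rw [hdn, Finset.card_union_of_disjoint hd2, Finset.card_union_of_disjoint hd1,
      Finset.card_singleton, hcarddb]
    have h1 : (S \ Icc (M - r + 1) M).card + (Icc (M - r + 1) M).card = S.card :=
      Finset.card_sdiff_add_card_eq_card hblocksub'
    omega
  have hbd : ∀ x ∈ phi S, 1 ≤ x ∧ x ≤ M := by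
    intro x hx
    rw [hmem] at hx
    rcases hx with (⟨hxS, -⟩ | hx) | hx
    · have h1 := le_MM h hxS
      have h2 : x ≠ 0 := fun e => h0 (e ▸ hxS)
      omega
    · omega
    · omega
  have hne' : (phi S).Nonempty := ⟨r, by rw [hmem]; right; rfl⟩
  have h0' : 0 ∉ phi S := by
    intro hc
    rw [hmem] at hc
    rcases hc with (⟨hxS, -⟩ | hc) | hc
    · exact h0 hxS
    · omega
    · omega
  have hlb : ∀ x ∈ phi S, r ≤ x := by
    intro x hx
    rw [hmem] at hx
    rcases hx with (⟨hxS, -⟩ | hx) | hx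
    · have := mm_le h hxS; omega
    · omega
    · omega
  have hMM' : MM (phi S) = M - 1 := by
    apply MM_char hne'
    · rw [hmem]; left; right; omega
    · intro x hx
      rw [hmem] at hx
      rcases hx with (⟨hxS, hnb⟩ | hx) | hx
      · have := hsmall x hxS hnb; omega
      · omega
      · omega
  have hmm' : mm (phi S) = r := by
    apply mm_char hne'
    · rw [hmem]; right; rfl
    · exact hlb
  have hrr' : r ≤ rr (phi S) := by
    apply le_rr h0'
    intro i hi
    rw [hMM', hmem]
    left; right
    omega
  have hnstair' : ¬ IsStair (phi S) := by
    rintro ⟨c, hc1, hcase⟩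
    have key : ∀ a b : ℕ, a ≤ b → (b = 2*a - 1 ∨ b = 2*a - 2) → phi S = Icc a b → False := by
      intro a b hab hrel hab2
      have hbM : b = M - 1 := by
        rw [← hMM', hab2]
        symm
        apply MM_char (by rw [hab2] at hne'; exact hne')
        · rw [mem_Icc]; omega
        · intro x hx; rw [mem_Icc] at hx; omega
      have haR : a = r := by
        rw [← hmm', hab2]
        symm
        apply mm_char (by rw [hab2] at hne'; exact hne')
        · rw [mem_Icc]; omega
        · intro x hx; rw [mem_Icc] at hx; omega
      omega
    rcases hcase with hcase | hcase
    · exact key c (2*c-1) (by omega) (by omega) hcase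
    · exact key (c+1) (2*c) (by omega) (by omega) hcase
  refine ⟨hsum, hcard, hbd, hnstair', ?_⟩
  have hup2 : phi (phi S) =
      (((phi S).erase r) \ Icc (M - r) (M - 1)) ∪ Icc (M - r + 1) M := by
    rw [phi, if_pos (by rw [hmm']; exact hrr')]
    rw [hMM', hmm']
    rw [show M - 1 - r + 1 = M - r by omega, show M - 1 - r + 2 = M - r + 1 by omega,
      show M - 1 + 1 = M by omega]
  rw [hup2]
  ext y
  simp only [mem_union, mem_sdiff, mem_erase, mem_Icc, hmem y]
  by_cases hy : y ∈ S
  · have hyM := le_MM h hy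
    have hym := mm_le h hy
    have hyne : y ≠ M - r := fun e => hMr_notin (e ▸ hy)
    simp only [hy, true_and, iff_true, ne_eq]
    omega
  · simp only [hy, false_and, false_or, iff_false, ne_eq]
    intro hc
    rcases hc with ⟨⟨hner, hmem2⟩, hndb⟩ | hblk
    · rcases hmem2 with hdb | hyr
      · exact absurd hdb hndb
      · exact hner hyr
    · exact hy (hblock_sub y hblk.1 hblk.2)

lemma sum_Icc_id_mul_two (a b : ℕ) : (∑ x ∈ Icc a b, x) * 2 = (a + b) * (b + 1 - a) := by
  by_cases hab : a ≤ b + 1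
  · have h1 : Icc a b = Ico a (b+1) := by rw [Nat.Icc_eq_range', Nat.Ico_eq_range']
    rw [h1]
    have h2 : ∑ x ∈ Ico 0 a, x + ∑ x ∈ Ico a (b+1), x = ∑ x ∈ Ico 0 (b+1), x :=
      Finset.sum_Ico_consecutive _ (Nat.zero_le a) hab
    have h3 : ∑ x ∈ Ico 0 a, x = ∑ x ∈ range a, x := by rw [Finset.range_eq_Ico]
    have h4 : ∑ x ∈ Ico 0 (b+1), x = ∑ x ∈ range (b+1), x := by rw [Finset.range_eq_Ico]
    have h5 := Finset.sum_range_id_mul_two a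
    have h6 := Finset.sum_range_id_mul_two (b+1)
    have h7 : (b+1) * (b+1-1) = (b+1) * b := by norm_num
    rw [h7] at h6
    have hmul := congrArg (· * 2) h2
    simp only [add_mul] at hmul
    rw [h3, h4] at hmul
    have hS : (∑ x ∈ Ico a (b+1), x) * 2 + a*(a-1) = (b+1)*b := by
      linarith [hmul, h5, h6]
    rcases Nat.eq_zero_or_pos a with rfl | ha1
    · rw [Nat.zero_add, Nat.sub_zero]
      have h8 : (b+1)*b = b*(b+1) := Nat.mul_comm _ _
      have h9 : (0:ℕ)*(0-1) = 0 := by norm_num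
      rw [h9] at hS
      linarith [hS]
    · have hc := congrArg (Nat.cast : ℕ → ℤ) hS
      push_cast [Nat.cast_sub ha1] at hc
      zify [hab]
      push_cast
      linear_combination hc
  · have h1 : Icc a b = ∅ := Finset.Icc_eq_empty (by omega)
    rw [h1]
    simp
    omega

lemma isign_coe (c : ℕ) : isign (c : ℤ) = (-1 : ℤ)^c := by
  rcases Nat.even_or_odd c with hc | hc
  · rw [isign, if_pos (by exact_mod_cast (Int.even_coe_nat c).2 hc), hc.neg_one_pow]
  · rw [isign, if_neg (by
      intro hcon
      exact (Nat.not_even_iff_odd.2 hc) ((Int.even_coe_nat c).1 hcon)), hc.neg_one_pow]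

lemma isign_neg (j : ℤ) : isign (-j) = isign j := isign_eq_of_parity (by omega)

theorem franklin_sum (k : ℕ) :
    ∑ T ∈ (Icc 1 k).powerset.filter (fun T => ∑ i ∈ T, i = k), (-1 : ℤ)^T.card = pentSign k := by
  classical
  rcases Nat.eq_zero_or_pos k with rfl | hk
  · rw [show Icc 1 0 = (∅ : Finset ℕ) from Finset.Icc_eq_empty (by omega)]
    rw [Finset.powerset_empty, pentSign_zero]
    rw [Finset.filter_singleton, if_pos (by simp)]
    simp
  -- k ≥ 1
  set F := (Icc 1 k).powerset.filter (fun T => ∑ i ∈ T, i = k) with hF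
  have hsplit : F = F.filter IsStair ∪ F.filter (fun T => ¬ IsStair T) :=
    (Finset.filter_union_filter_not_eq _ F).symm
  rw [hsplit, Finset.sum_union (Finset.disjoint_filter_filter_not F F _)]
  have hgood : ∑ T ∈ F.filter (fun T => ¬ IsStair T), (-1 : ℤ)^T.card = 0 := by
    apply Finset.sum_involution (fun T _ => phi T)
    · -- signs cancel
      intro T hT
      simp only [mem_filter, hF, mem_powerset] at hT
      obtain ⟨⟨hsub, hsum⟩, hns⟩ := hT
      have hne : T.Nonempty := by
        rcases Finset.eq_empty_or_nonempty T with rfl | h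
        · simp at hsum; omega
        · exact h
      have h0 : 0 ∉ T := fun hc => by have := hsub hc; rw [mem_Icc] at this; omega
      have hcard : (phi T).card + 1 = T.card ∨ T.card + 1 = (phi T).card := by
        by_cases hc : mm T ≤ rr T
        · exact Or.inl (up_main hne h0 hns hc).2.1
        · exact Or.inr (down_main hne h0 hns (by omega)).2.1
      rcases hcard with hc | hc
      · rw [← hc, pow_succ]; ring
      · rw [← hc, pow_succ]; ring
    · -- phi T ≠ T
      intro T hT hf
      simp only [mem_filter, hF, mem_powerset] at hT
      obtain ⟨⟨hsub, hsum⟩, hns⟩ := hT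
      have hne : T.Nonempty := by
        rcases Finset.eq_empty_or_nonempty T with rfl | h
        · simp at hsum; omega
        · exact h
      have h0 : 0 ∉ T := fun hc => by have := hsub hc; rw [mem_Icc] at this; omega
      intro he
      have hcard : (phi T).card + 1 = T.card ∨ T.card + 1 = (phi T).card := by
        by_cases hc : mm T ≤ rr T
        · exact Or.inl (up_main hne h0 hns hc).2.1
        · exact Or.inr (down_main hne h0 hns (by omega)).2.1
      rw [he] at hcard
      omega
    · -- phi T ∈ F.filter ¬IsStair
      intro T hT
      simp only [mem_filter, hF, mem_powerset] at hT ⊢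
      obtain ⟨⟨hsub, hsum⟩, hns⟩ := hT
      have hne : T.Nonempty := by
        rcases Finset.eq_empty_or_nonempty T with rfl | h
        · simp at hsum; omega
        · exact h
      have h0 : 0 ∉ T := fun hc => by have := hsub hc; rw [mem_Icc] at this; omega
      by_cases hc : mm T ≤ rr T
      · obtain ⟨hsum', -, hbd, hns', -⟩ := up_main hne h0 hns hc
        have hm1 : 1 ≤ mm T := by
          have := hsub (mm_mem hne); rw [mem_Icc] at this; omega
        have hMk : MM T + 1 ≤ k := by
          -- sum T ≥ mm T + MM T ≥ 1 + MM T
          have h2m := up_struct hne h0 hns hc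
          have hlt : mm T < MM T := by omega
          have hMT := MM_mem hne
          have hmT : mm T ∈ T.erase (MM T) := by
            rw [mem_erase]; exact ⟨by omega, mm_mem hne⟩
          have h5 : MM T + ∑ x ∈ T.erase (MM T), x = ∑ x ∈ T, x :=
            Finset.add_sum_erase T (fun x => x) hMT
          have h6 : mm T ≤ ∑ x ∈ T.erase (MM T), x :=
            Finset.single_le_sum (fun i _ => Nat.zero_le i) hmT
          omega
        refine ⟨⟨?_, by rw [hsum']; exact hsum⟩, hns'⟩
        intro x hx
        rw [mem_Icc]
        obtain ⟨h1, h2⟩ := hbd x hx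
        omega
      · obtain ⟨hsum', -, hbd, hns', -⟩ := down_main hne h0 hns (by omega)
        have hMk : MM T ≤ k := by
          have := hsub (MM_mem hne); rw [mem_Icc] at this; omega
        refine ⟨⟨?_, by rw [hsum']; exact hsum⟩, hns'⟩
        intro x hx
        rw [mem_Icc]
        obtain ⟨h1, h2⟩ := hbd x hx
        omega
    · -- involution
      intro T hT
      simp only [mem_filter, hF, mem_powerset] at hT
      obtain ⟨⟨hsub, hsum⟩, hns⟩ := hT
      have hne : T.Nonempty := by
        rcases Finset.eq_empty_or_nonempty T with rfl | h
        · simp at hsum; omega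
        · exact h
      have h0 : 0 ∉ T := fun hc => by have := hsub hc; rw [mem_Icc] at this; omega
      by_cases hc : mm T ≤ rr T
      · exact (up_main hne h0 hns hc).2.2.2.2
      · exact (down_main hne h0 hns (by omega)).2.2.2.2
  rw [hgood, add_zero]
  have hsum1 : ∀ c : ℕ, 1 ≤ c → (∑ x ∈ Icc c (2*c-1), x) * 2 = c * (3*c-1) := by
    intro c hc
    rw [sum_Icc_id_mul_two]
    rw [show c + (2*c-1) = 3*c-1 by omega, show 2*c-1+1-c = c by omega, Nat.mul_comm]
  have hsum2 : ∀ c : ℕ, 1 ≤ c → (∑ x ∈ Icc (c+1) (2*c), x) * 2 = c * (3*c+1) := by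
    intro c hc
    rw [sum_Icc_id_mul_two]
    rw [show c+1 + 2*c = 3*c+1 by omega, show 2*c+1-(c+1) = c by omega, Nat.mul_comm]
  by_cases hex : ∃ j : ℤ, j * (3 * j - 1) = 2 * k
  · obtain ⟨j, hj⟩ := hex
    have hj0 : j ≠ 0 := by rintro rfl; simp at hj; omega
    rcases lt_trichotomy j 0 with hjneg | hj00 | hjpos
    · -- j < 0 : T2 staircase with c = (-j).toNat
      set c := (-j).toNat with hcdef
      have hc1 : 1 ≤ c := by omega
      have hjc : j = -(c : ℤ) := by omega
      have hknat : c * (3*c+1) = 2*k := by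
        have hq : (c:ℤ) * (3*(c:ℤ)+1) = 2*(k:ℤ) := by
          rw [hjc] at hj; linear_combination hj
        exact_mod_cast hq
      have hmemIcc : Icc (c+1) (2*c) ⊆ Icc 1 k := by
        intro x hx; rw [mem_Icc] at hx ⊢
        refine ⟨by omega, ?_⟩
        have hzz : 2*(k:ℤ) = 3*(c:ℤ)^2 + c := by
          have := congrArg (Nat.cast : ℕ → ℤ) hknat
          push_cast at this
          nlinarith [this]
        have hxz : (x:ℤ) ≤ 2*(c:ℤ) := by omega
        have : (x:ℤ) ≤ (k:ℤ) := by nlinarith [hzz, hxz, (by omega : (1:ℤ) ≤ (c:ℤ))]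
        omega
      have hsumc : ∑ x ∈ Icc (c+1) (2*c), x = k := by
        have := hsum2 c hc1; omega
      have hstair : F.filter IsStair = {Icc (c+1) (2*c)} := by
        apply Finset.eq_singleton_iff_unique_mem.mpr
        constructor
        · simp only [mem_filter, hF, mem_powerset]
          exact ⟨⟨hmemIcc, hsumc⟩, ⟨c, hc1, Or.inr rfl⟩⟩
        · rintro T hT
          simp only [mem_filter, hF, mem_powerset] at hT
          obtain ⟨⟨hTsub, hTsum⟩, c', hc'1, hcase | hcase⟩ := hT
          · exfalso
            have h2 := hsum1 c' hc'1
            rw [hcase] at hTsum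
            have hqn : c' * (3*c'-1) = 2*k := by omega
            have hq : (c':ℤ) * (3*(c':ℤ)-1) = 2*(k:ℤ) := by
              have := congrArg (Nat.cast : ℕ → ℤ) hqn
              push_cast [Nat.cast_sub (by omega : 1 ≤ 3*c')] at this
              linear_combination this
            have hce := pent_unique (hq.trans hj.symm)
            omega
          · have h2 := hsum2 c' hc'1
            rw [hcase] at hTsum
            have hqn : c' * (3*c'+1) = 2*k := by omega
            have hqz : (c':ℤ) * (3*(c':ℤ)+1) = 2*(k:ℤ) := by exact_mod_cast hqn
            have hq' : (-(c':ℤ)) * (3*(-(c':ℤ)) - 1) = 2*(k:ℤ) := by linear_combination hqz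
            have hce := pent_unique (hq'.trans hj.symm)
            have hcc : c' = c := by omega
            rw [hcase, hcc]
      rw [hstair, Finset.sum_singleton, pentSign_of hj]
      rw [show (Icc (c+1) (2*c)).card = c by rw [Nat.card_Icc]; omega]
      rw [hjc, isign_neg, isign_coe]
    · exact absurd hj00 hj0
    · -- j > 0 : T1 staircase with c = j.toNat
      set c := j.toNat with hcdef
      have hc1 : 1 ≤ c := by omega
      have hjc : j = (c : ℤ) := by omega
      have hknat : c * (3*c-1) = 2*k := by
        have hq : (c:ℤ) * (3*(c:ℤ)-1) = 2*(k:ℤ) := by rw [← hjc]; exact hj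
        have h3 : ((c * (3*c-1) : ℕ) : ℤ) = (c:ℤ) * (3*(c:ℤ)-1) := by
          push_cast [Nat.cast_sub (by omega : 1 ≤ 3*c)]
          ring
        exact_mod_cast h3.trans hq
      have hmemIcc : Icc c (2*c-1) ⊆ Icc 1 k := by
        intro x hx; rw [mem_Icc] at hx ⊢
        refine ⟨by omega, ?_⟩
        have hzz : 2*(k:ℤ) = 3*(c:ℤ)^2 - c := by
          have := congrArg (Nat.cast : ℕ → ℤ) hknat
          push_cast [Nat.cast_sub (by omega : 1 ≤ 3*c)] at this
          nlinarith [this]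
        have hxz : (x:ℤ) ≤ 2*(c:ℤ) - 1 := by omega
        have : (x:ℤ) ≤ (k:ℤ) := by nlinarith [hzz, hxz, (by omega : (1:ℤ) ≤ (c:ℤ))]
        omega
      have hsumc : ∑ x ∈ Icc c (2*c-1), x = k := by
        have := hsum1 c hc1; omega
      have hstair : F.filter IsStair = {Icc c (2*c-1)} := by
        apply Finset.eq_singleton_iff_unique_mem.mpr
        constructor
        · simp only [mem_filter, hF, mem_powerset]
          exact ⟨⟨hmemIcc, hsumc⟩, ⟨c, hc1, Or.inl rfl⟩⟩
        · rintro T hT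
          simp only [mem_filter, hF, mem_powerset] at hT
          obtain ⟨⟨hTsub, hTsum⟩, c', hc'1, hcase | hcase⟩ := hT
          · have h2 := hsum1 c' hc'1
            rw [hcase] at hTsum
            have hqn : c' * (3*c'-1) = 2*k := by omega
            have hq : (c':ℤ) * (3*(c':ℤ)-1) = 2*(k:ℤ) := by
              have := congrArg (Nat.cast : ℕ → ℤ) hqn
              push_cast [Nat.cast_sub (by omega : 1 ≤ 3*c')] at this
              linear_combination this
            have hce := pent_unique (hq.trans hj.symm)
            have hcc : c' = c := by omega
            rw [hcase, hcc]
          · exfalso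
            have h2 := hsum2 c' hc'1
            rw [hcase] at hTsum
            have hqn : c' * (3*c'+1) = 2*k := by omega
            have hqz : (c':ℤ) * (3*(c':ℤ)+1) = 2*(k:ℤ) := by exact_mod_cast hqn
            have hq' : (-(c':ℤ)) * (3*(-(c':ℤ)) - 1) = 2*(k:ℤ) := by linear_combination hqz
            have hce := pent_unique (hq'.trans hj.symm)
            omega
      rw [hstair, Finset.sum_singleton, pentSign_of hj]
      rw [show (Icc c (2*c-1)).card = c by rw [Nat.card_Icc]; omega]
      rw [hjc, isign_coe]
  · push_neg at hex
    rw [pentSign_eq_zero hex]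
    rw [Finset.filter_false_of_mem, Finset.sum_empty]
    rintro T hT ⟨c, hc1, hcase | hcase⟩
    · simp only [mem_filter, hF, mem_powerset] at hT
      obtain ⟨-, hTsum⟩ := hT
      have h2 := hsum1 c hc1
      rw [hcase] at hTsum
      have hqn : c * (3*c-1) = 2*k := by omega
      refine hex (c:ℤ) ?_
      have := congrArg (Nat.cast : ℕ → ℤ) hqn
      push_cast [Nat.cast_sub (by omega : 1 ≤ 3*c)] at this
      linear_combination this
    · simp only [mem_filter, hF, mem_powerset] at hT
      obtain ⟨-, hTsum⟩ := hT
      have h2 := hsum2 c hc1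
      rw [hcase] at hTsum
      have hqn : c * (3*c+1) = 2*k := by omega
      refine hex (-(c:ℤ)) ?_
      have hqz : (c:ℤ) * (3*(c:ℤ)+1) = 2*(k:ℤ) := by exact_mod_cast hqn
      linear_combination hqz

end Franklin

noncomputable def Aconv (u : ℕ) : ℤ := ∑ p ∈ antidiagonal u, pentSign p.1 * pentSign p.2

lemma Avanish {u : ℕ} (h11 : u % 11 = 10) (h121 : u % 121 ≠ 10) : Aconv u = 0 := by
  apply Finset.sum_eq_zero
  rintro ⟨x, y⟩ hp
  rw [HasAntidiagonal.mem_antidiagonal] at hp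
  by_contra hne
  have hx : pentSign x ≠ 0 := fun h => hne (by simp [h])
  have hy : pentSign y ≠ 0 := fun h => hne (by simp [h])
  have := support_mod hx hy hp h11
  omega

lemma Aeq (U : ℕ) : Aconv (121 * U + 10) = Aconv U := by
  unfold Aconv
  rw [← Finset.sum_filter_of_ne (p := fun p : ℕ × ℕ => p.1 % 121 = 5 ∧ p.2 % 121 = 5)
    (by
      rintro ⟨x, y⟩ hp hne
      rw [HasAntidiagonal.mem_antidiagonal] at hp
      have hx : pentSign x ≠ 0 := fun h => hne (by simp [h])
      have hy : pentSign y ≠ 0 := fun h => hne (by simp [h])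
      exact support_mod hx hy hp (by omega))]
  apply Finset.sum_nbij' (i := fun p : ℕ × ℕ => (((p.1 - 5)/121 : ℕ), ((p.2 - 5)/121 : ℕ)))
    (j := fun q : ℕ × ℕ => (121 * q.1 + 5, 121 * q.2 + 5))
  · rintro ⟨x, y⟩ hp
    simp only [mem_filter, HasAntidiagonal.mem_antidiagonal] at hp ⊢
    omega
  · rintro ⟨X, Y⟩ hq
    simp only [mem_filter, HasAntidiagonal.mem_antidiagonal] at hq ⊢
    omega
  · rintro ⟨x, y⟩ hp
    simp only [mem_filter, HasAntidiagonal.mem_antidiagonal] at hp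
    simp only [Prod.mk.injEq]
    omega
  · rintro ⟨X, Y⟩ hq
    simp only [Prod.mk.injEq]
    omega
  · rintro ⟨x, y⟩ hp
    simp only [mem_filter, HasAntidiagonal.mem_antidiagonal] at hp
    obtain ⟨hp1, hx5, hy5⟩ := hp
    obtain ⟨X, rfl⟩ : ∃ X, x = 121 * X + 5 := ⟨(x-5)/121, by omega⟩
    obtain ⟨Y, rfl⟩ : ∃ Y, y = 121 * Y + 5 := ⟨(y-5)/121, by omega⟩
    simp only
    rw [pentSign_121, pentSign_121]
    congr 2 <;> omega

lemma coeff_prod_one_sub (s : Finset ℕ) (f : ℕ → ℕ) (k : ℕ) :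
    PowerSeries.coeff (R := ℤ) k (∏ m ∈ s, (1 - PowerSeries.X ^ (f m))) =
      ∑ T ∈ s.powerset.filter (fun T => ∑ i ∈ T, f i = k), (-1 : ℤ)^T.card := by
  classical
  have h1 : ∀ m, (1 - PowerSeries.X ^ (f m) : PowerSeries ℤ) = -(X ^ (f m)) + 1 := by
    intro m; ring
  simp_rw [h1, Finset.prod_add]
  rw [map_sum]
  have h2 : ∀ T ∈ s.powerset,
      (PowerSeries.coeff (R := ℤ) k) ((∏ i ∈ T, -(X:PowerSeries ℤ) ^ f i) * ∏ i ∈ s \ T, 1) =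
      if ∑ i ∈ T, f i = k then (-1 : ℤ)^T.card else 0 := by
    intro T _
    rw [Finset.prod_const_one, mul_one]
    have : (∏ i ∈ T, -(X:PowerSeries ℤ) ^ f i) = ((-1 : PowerSeries ℤ))^T.card * X ^ (∑ i ∈ T, f i) := by
      rw [← Finset.prod_pow_eq_pow_sum, ← Finset.prod_const, ← Finset.prod_mul_distrib]
      apply Finset.prod_congr rfl
      intro i _; ring
    rw [this]
    have hneg : ((-1 : PowerSeries ℤ))^T.card = ((-1:ℤ)^T.card : ℤ) • (1 : PowerSeries ℤ) := by
      rw [zsmul_eq_mul, mul_one]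
      push_cast
      norm_cast
    rw [hneg, smul_mul_assoc, one_mul, map_zsmul, PowerSeries.coeff_X_pow, zsmul_eq_mul]
    by_cases h : ∑ i ∈ T, f i = k
    · simp [h]
    · rw [if_neg h, if_neg (fun hh => h hh.symm)]
      simp
  rw [Finset.sum_congr rfl h2, Finset.sum_filter]

lemma filter_powerset_eq {k N : ℕ} (h : k ≤ N) :
    (Icc 1 N).powerset.filter (fun T => ∑ i ∈ T, i = k) =
    (Icc 1 k).powerset.filter (fun T => ∑ i ∈ T, i = k) := by
  ext T
  simp only [mem_filter, mem_powerset]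
  constructor
  · rintro ⟨hsub, hsum⟩
    refine ⟨fun x hx => ?_, hsum⟩
    have h1 := hsub hx
    rw [mem_Icc] at h1 ⊢
    refine ⟨h1.1, ?_⟩
    calc x ≤ ∑ i ∈ T, i := Finset.single_le_sum (fun i _ => Nat.zero_le i) hx
    _ = k := hsum
  · rintro ⟨hsub, hsum⟩
    exact ⟨hsub.trans (Finset.Icc_subset_Icc_right h), hsum⟩

lemma coeffP {N k : ℕ} (h : k ≤ N) :
    PowerSeries.coeff (R := ℤ) k (∏ m ∈ Icc 1 N, (1 - PowerSeries.X ^ m)) = pentSign k := by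
  have := coeff_prod_one_sub (Icc 1 N) (fun m => m) k
  rw [this, filter_powerset_eq h, Franklin.franklin_sum]

lemma coeffQ {N k : ℕ} (h : k ≤ 11*N) :
    PowerSeries.coeff (R := ℤ) k (∏ m ∈ Icc 1 N, (1 - PowerSeries.X ^ (11*m))) =
      if 11 ∣ k then pentSign (k/11) else 0 := by
  rw [coeff_prod_one_sub (Icc 1 N) (fun m => 11*m) k]
  by_cases hd : 11 ∣ k
  · rw [if_pos hd]
    obtain ⟨k', rfl⟩ := hd
    have hfil : (Icc 1 N).powerset.filter (fun T => ∑ i ∈ T, 11*i = 11*k') =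
        (Icc 1 N).powerset.filter (fun T => ∑ i ∈ T, i = k') := by
      apply Finset.filter_congr
      intro T _
      rw [← Finset.mul_sum]
      omega
    rw [hfil, filter_powerset_eq (by omega), Franklin.franklin_sum]
    congr 1
    omega
  · rw [if_neg hd]
    rw [Finset.filter_false_of_mem, Finset.sum_empty]
    intro T _
    intro hsum
    exact hd ⟨∑ i ∈ T, i, by rw [← hsum, Finset.mul_sum]⟩

lemma coeffPP {N u : ℕ} (hu : u ≤ N) :
    PowerSeries.coeff (R := ℤ) u ((∏ m ∈ Icc 1 N, (1 - PowerSeries.X ^ m)) *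
      (∏ m ∈ Icc 1 N, (1 - PowerSeries.X ^ m))) = Aconv u := by
  rw [PowerSeries.coeff_mul]
  apply Finset.sum_congr rfl
  rintro ⟨x, y⟩ hp
  rw [HasAntidiagonal.mem_antidiagonal] at hp
  rw [coeffP (by omega), coeffP (by omega)]

lemma coeffQQ {N w : ℕ} (hw : w ≤ 11*N) :
    PowerSeries.coeff (R := ℤ) w ((∏ m ∈ Icc 1 N, (1 - PowerSeries.X ^ (11*m))) *
      (∏ m ∈ Icc 1 N, (1 - PowerSeries.X ^ (11*m)))) =
      if 11 ∣ w then Aconv (w/11) else 0 := by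
  rw [PowerSeries.coeff_mul]
  have hterm : ∀ p ∈ antidiagonal w,
      (PowerSeries.coeff (R := ℤ) p.1) (∏ m ∈ Icc 1 N, (1 - PowerSeries.X ^ (11*m))) *
      (PowerSeries.coeff (R := ℤ) p.2) (∏ m ∈ Icc 1 N, (1 - PowerSeries.X ^ (11*m))) =
      if 11 ∣ p.1 ∧ 11 ∣ p.2 then pentSign (p.1/11) * pentSign (p.2/11) else 0 := by
    rintro ⟨x, y⟩ hp
    rw [HasAntidiagonal.mem_antidiagonal] at hp
    rw [coeffQ (by omega), coeffQ (by omega)]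
    by_cases h1 : 11 ∣ x <;> by_cases h2 : 11 ∣ y <;>
      simp [h1, h2]
  rw [Finset.sum_congr rfl hterm]
  by_cases hd : 11 ∣ w
  · rw [if_pos hd, ← Finset.sum_filter]
    apply Finset.sum_nbij' (i := fun p : ℕ × ℕ => (p.1/11, p.2/11))
      (j := fun q : ℕ × ℕ => (11*q.1, 11*q.2))
    · rintro ⟨x, y⟩ hp
      simp only [mem_filter, HasAntidiagonal.mem_antidiagonal] at hp ⊢
      omega
    · rintro ⟨X, Y⟩ hq
      simp only [mem_filter, HasAntidiagonal.mem_antidiagonal] at hq ⊢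
      omega
    · rintro ⟨x, y⟩ hp
      simp only [mem_filter, HasAntidiagonal.mem_antidiagonal] at hp
      simp only [Prod.mk.injEq]
      omega
    · rintro ⟨X, Y⟩ hq
      simp only [Prod.mk.injEq]
      omega
    · rintro ⟨x, y⟩ hp
      rfl
  · rw [if_neg hd]
    apply Finset.sum_eq_zero
    rintro ⟨x, y⟩ hp
    rw [HasAntidiagonal.mem_antidiagonal] at hp
    rw [if_neg]
    rintro ⟨h1, h2⟩
    exact hd (by omega)

lemma c_formula {N n' : ℕ} (h1 : 1 ≤ n') (hn : n' ≤ N) :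
    PowerSeries.coeff (R := ℤ) n' (PowerSeries.X * ∏ m ∈ Finset.Icc 1 N,
        ((1 - PowerSeries.X ^ m) ^ 2 * (1 - PowerSeries.X ^ (11 * m)) ^ 2)) =
    ∑ p ∈ (antidiagonal (n'-1)).filter (fun p => 11 ∣ p.2), Aconv p.1 * Aconv (p.2/11) := by
  have hsplit : ∏ m ∈ Finset.Icc 1 N, ((1 - PowerSeries.X ^ m) ^ 2 * (1 - (PowerSeries.X : PowerSeries ℤ) ^ (11 * m)) ^ 2)
      = ((∏ m ∈ Icc 1 N, (1 - PowerSeries.X ^ m)) * (∏ m ∈ Icc 1 N, (1 - PowerSeries.X ^ m))) *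
        ((∏ m ∈ Icc 1 N, (1 - PowerSeries.X ^ (11*m))) * (∏ m ∈ Icc 1 N, (1 - PowerSeries.X ^ (11*m)))) := by
    rw [Finset.prod_mul_distrib, Finset.prod_pow, Finset.prod_pow]
    ring
  rw [hsplit]
  obtain ⟨n'', rfl⟩ : ∃ n'', n' = n'' + 1 := ⟨n'-1, by omega⟩
  rw [PowerSeries.coeff_succ_X_mul, PowerSeries.coeff_mul]
  have hterm : ∑ p ∈ antidiagonal n'',
      (PowerSeries.coeff (R := ℤ) p.1) ((∏ m ∈ Icc 1 N, (1 - PowerSeries.X ^ m)) * (∏ m ∈ Icc 1 N, (1 - PowerSeries.X ^ m))) *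
      (PowerSeries.coeff (R := ℤ) p.2) ((∏ m ∈ Icc 1 N, (1 - PowerSeries.X ^ (11*m))) * (∏ m ∈ Icc 1 N, (1 - PowerSeries.X ^ (11*m)))) =
      ∑ p ∈ antidiagonal n'', Aconv p.1 * (if 11 ∣ p.2 then Aconv (p.2/11) else 0) := by
    refine Finset.sum_congr rfl fun p hp => ?_
    rw [HasAntidiagonal.mem_antidiagonal] at hp
    rw [coeffPP (by omega), coeffQQ (by omega)]
  rw [hterm]
  simp only [Nat.add_sub_cancel]
  rw [Finset.sum_filter]
  refine Finset.sum_congr rfl (fun p _ => ?_)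
  by_cases h : 11 ∣ p.2 <;> simp [h]

/-- If c(n) are the q-expansion coefficients of η(τ)²η(11τ)², i.e.
∑ c(n) qⁿ = q·∏_{m≥1}(1−q^m)²(1−q^{11m})² (the coefficients stabilize under truncation
of the product to m ≤ N for any N ≥ n), then c(11n) = c(n) for all n ≥ 1: it is an
eigenform of the Atkin–Lehner operator U₁₁ with eigenvalue +1. -/
theorem eta_squared_eleven_atkinLehner (c : ℕ → ℤ)
    (hc : ∀ n N : ℕ, n ≤ N →
      c n = PowerSeries.coeff (R := ℤ) n
        (PowerSeries.X * ∏ m ∈ Finset.Icc 1 N,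
          ((1 - PowerSeries.X ^ m) ^ 2 * (1 - PowerSeries.X ^ (11 * m)) ^ 2))) :
    ∀ n : ℕ, 0 < n → c (11 * n) = c n := by
  intro n hn
  have e1 : c (11*n) = ∑ p ∈ (antidiagonal (11*n-1)).filter (fun p => 11 ∣ p.2),
      Aconv p.1 * Aconv (p.2/11) := by
    rw [hc (11*n) (11*n) le_rfl, c_formula (by omega) le_rfl]
  have e2 : c n = ∑ p ∈ (antidiagonal (n-1)).filter (fun p => 11 ∣ p.2),
      Aconv p.1 * Aconv (p.2/11) := by
    rw [hc n (11*n) (by omega), c_formula (by omega) (by omega)]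
  rw [e1, e2]
  -- restrict to p.1 % 121 = 10
  rw [show ((antidiagonal (11*n-1)).filter (fun p => 11 ∣ p.2)) =
      ((antidiagonal (11*n-1)).filter (fun p => 11 ∣ p.2 ∧ p.1 % 121 = 10)) ∪
      ((antidiagonal (11*n-1)).filter (fun p => 11 ∣ p.2 ∧ ¬(p.1 % 121 = 10))) from by
    rw [← Finset.filter_or]
    apply Finset.filter_congr
    intro p _
    tauto]
  rw [Finset.sum_union (by
    rw [Finset.disjoint_left]
    intro p hp1 hp2
    simp only [mem_filter] at hp1 hp2
    tauto)]
  have hzero : ∑ p ∈ ((antidiagonal (11*n-1)).filter (fun p => 11 ∣ p.2 ∧ ¬(p.1 % 121 = 10))),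
      Aconv p.1 * Aconv (p.2/11) = 0 := by
    apply Finset.sum_eq_zero
    rintro ⟨x, y⟩ hp
    simp only [mem_filter, HasAntidiagonal.mem_antidiagonal] at hp
    obtain ⟨hxy, hdvd, hne⟩ := hp
    rw [Avanish (by omega) hne, zero_mul]
  rw [hzero, add_zero]
  apply Finset.sum_nbij' (i := fun p : ℕ × ℕ => (p.2/11, 11*((p.1-10)/121)))
    (j := fun q : ℕ × ℕ => (121*(q.2/11)+10, 11*q.1))
  · rintro ⟨x, y⟩ hp
    simp only [mem_filter, HasAntidiagonal.mem_antidiagonal] at hp ⊢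
    omega
  · rintro ⟨X, Y⟩ hq
    simp only [mem_filter, HasAntidiagonal.mem_antidiagonal] at hq ⊢
    omega
  · rintro ⟨x, y⟩ hp
    simp only [mem_filter, HasAntidiagonal.mem_antidiagonal] at hp
    simp only [Prod.mk.injEq]
    omega
  · rintro ⟨X, Y⟩ hq
    simp only [mem_filter, HasAntidiagonal.mem_antidiagonal] at hq
    simp only [Prod.mk.injEq]
    omega
  · rintro ⟨x, y⟩ hp
    simp only [mem_filter, HasAntidiagonal.mem_antidiagonal] at hp
    obtain ⟨hxy, hdvd, h121⟩ := hp
    obtain ⟨a, ha⟩ : ∃ a, x = 121*a + 10 := ⟨(x-10)/121, by omega⟩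
    obtain ⟨v, hv⟩ : ∃ v, y = 11*v := hdvd
    subst ha hv
    simp only
    rw [show 11*v/11 = v by omega, show (121*a+10-10)/121 = a by omega,
      show 11*a/11 = a by omega, Aeq, mul_comm]
end
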